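/- Define F : ℝ^n → ℝ^n by F(z) = K⁻¹Aᵀb(z) + g(z). Then every mixed second-order partial derivative of every component of F vanishes: for all indices i, j, k with j ≠ k and all z ∈ ℝ^n, ∂²F_i/∂z_j∂z_k (z) = 0. Consequently, for any fixed vector α ∈ ℝ^n, the matrix with (j,k) entry Σ_{i=1}^n α_i · ∂²F_i/∂z_j∂z_k (z) is diagonal. -/

import Mathlib

open Matrix

private lemma aux_hasDerivAt_int (a b : ℝ) (hab : a ≤ b) (E : ℝ → ℝ)
    (hE : ContinuousOn E (Set.Icc a b)) (n : ℕ) (s : ℝ) :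
    HasDerivAt (fun s => ∫ t in a..b, (E t) ^ n * Real.exp (s * E t))
      (∫ t in a..b, (E t) ^ (n + 1) * Real.exp (s * E t)) s := by
  obtain ⟨C, hC⟩ := (isCompact_Icc).exists_bound_of_continuousOn hE
  have hC0 : 0 ≤ C := le_trans (norm_nonneg _) (hC a (Set.left_mem_Icc.2 hab))
  have hcont : ∀ (x : ℝ) (k : ℕ),
      ContinuousOn (fun t => (E t) ^ k * Real.exp (x * E t)) (Set.Icc a b) := by
    intro x k
    exact (hE.pow k).mul (Real.continuous_exp.comp_continuousOn (continuousOn_const.mul hE))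
  have hsub : Set.uIoc a b ⊆ Set.Icc a b := by
    rw [Set.uIoc_of_le hab]; exact Set.Ioc_subset_Icc_self
  have huIcc : Set.uIcc a b = Set.Icc a b := Set.uIcc_of_le hab
  have h := intervalIntegral.hasDerivAt_integral_of_dominated_loc_of_deriv_le
    (𝕜 := ℝ) (μ := MeasureTheory.volume) (a := a) (b := b)
    (F := fun x t => (E t) ^ n * Real.exp (x * E t))
    (F' := fun x t => (E t) ^ (n + 1) * Real.exp (x * E t))
    (bound := fun _ => C ^ (n + 1) * Real.exp ((|s| + 1) * C))
    (x₀ := s) (Metric.ball_mem_nhds s one_pos)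
    (Filter.Eventually.of_forall fun x =>
      ((hcont x n).mono hsub).aestronglyMeasurable measurableSet_uIoc)
    ((huIcc ▸ hcont s n).intervalIntegrable)
    (((hcont s (n + 1)).mono hsub).aestronglyMeasurable measurableSet_uIoc)
    ?_ intervalIntegrable_const ?_
  · exact h.2
  · refine Filter.Eventually.of_forall fun t ht x hx => ?_
    have hEt : |E t| ≤ C := hC t (hsub ht)
    have hx' : |x| ≤ |s| + 1 := by
      have h1 : |x - s| < 1 := mem_ball_iff_norm.mp hx
      calc |x| = |s + (x - s)| := by ring_nf
        _ ≤ |s| + |x - s| := abs_add_le _ _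
        _ ≤ |s| + 1 := by linarith
    have h1 : |E t| ^ (n + 1) ≤ C ^ (n + 1) := pow_le_pow_left₀ (abs_nonneg _) hEt _
    have h2 : x * E t ≤ (|s| + 1) * C := by
      calc x * E t ≤ |x * E t| := le_abs_self _
        _ = |x| * |E t| := abs_mul _ _
        _ ≤ (|s| + 1) * C := mul_le_mul hx' hEt (abs_nonneg _) (by positivity)
    calc ‖(E t) ^ (n + 1) * Real.exp (x * E t)‖
        = |E t| ^ (n + 1) * Real.exp (x * E t) := by
          rw [norm_mul, Real.norm_eq_abs, Real.norm_eq_abs, abs_pow,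
            abs_of_pos (Real.exp_pos _)]
      _ ≤ C ^ (n + 1) * Real.exp ((|s| + 1) * C) :=
          mul_le_mul h1 (Real.exp_le_exp.2 h2) (Real.exp_pos _).le (by positivity)
  · refine Filter.Eventually.of_forall fun t ht x hx => ?_
    have h1 : HasDerivAt (fun x : ℝ => x * E t) (E t) x := hasDerivAt_mul_const _
    have h2 := (h1.exp).const_mul ((E t) ^ n)
    convert h2 using 1
    · rfl
    ring

private lemma aux_zero {N : ℕ} (h h1 h2 : Fin N → ℝ → ℝ)
    (hh : ∀ q s, HasDerivAt (h q) (h1 q s) s)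
    (hh1 : ∀ q s, HasDerivAt (h1 q) (h2 q s) s)
    (f : (Fin N → ℝ) → ℝ) (C : ℝ) (c : Fin N → ℝ)
    (hf : f = fun v => C + ∑ q, c q * h q (v q))
    (j k : Fin N) (hjk : j ≠ k) (z : Fin N → ℝ) :
    fderiv ℝ (fun w => fderiv ℝ f w (Pi.single k 1)) z (Pi.single j 1) = 0 := by
  subst hf
  have key : ∀ (w : Fin N → ℝ),
      HasFDerivAt (fun v => C + ∑ q, c q * h q (v q))
        (∑ q, (c q * h1 q (w q)) •
          (ContinuousLinearMap.proj q : ((Fin N → ℝ) →L[ℝ] ℝ))) w := by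
    intro w
    refine HasFDerivAt.const_add C ?_
    apply HasFDerivAt.fun_sum
    intro q _
    have hp : HasFDerivAt (fun v : Fin N → ℝ => v q)
        ((ContinuousLinearMap.proj q : (Fin N → ℝ) →L[ℝ] ℝ)) w := hasFDerivAt_apply q w
    have := ((hh q (w q)).comp_hasFDerivAt w hp).const_mul (c q)
    simpa [Function.comp, smul_smul] using this
  have e1 : (fun w => fderiv ℝ (fun v => C + ∑ q, c q * h q (v q)) w (Pi.single k 1))
      = fun w => c k * h1 k (w k) := by
    funext w
    rw [(key w).fderiv]
    simp [ContinuousLinearMap.sum_apply, Pi.single_apply]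
  rw [e1]
  have key2 : HasFDerivAt (fun w : Fin N → ℝ => c k * h1 k (w k))
      ((c k * h2 k (z k)) • (ContinuousLinearMap.proj k : ((Fin N → ℝ) →L[ℝ] ℝ))) z := by
    have hp : HasFDerivAt (fun v : Fin N → ℝ => v k)
        ((ContinuousLinearMap.proj k : (Fin N → ℝ) →L[ℝ] ℝ)) z := hasFDerivAt_apply k z
    simpa [Function.comp, smul_smul] using ((hh1 k (z k)).comp_hasFDerivAt z hp).const_mul (c k)
  rw [key2.fderiv]
  simp [Pi.single_eq_of_ne (Ne.symm hjk)]

/-- Bilevel context (`n = m+1 ≥ 2`): with `F(z) = K⁻¹Aᵀb(z) + g(z)`, every mixed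
second-order partial derivative `∂²F_i/∂z_j∂z_k` (`j ≠ k`) vanishes; consequently,
for any `α ∈ ℝ^n` the matrix `(j,k) ↦ ∑ i, α i · ∂²F_i/∂z_j∂z_k (z)` is diagonal. -/
theorem stmt_12 (m : ℕ) (hm : 1 ≤ m)
    (a b : Fin (m + 1) → ℝ) (hab : ∀ i, a i < b i)
    (E : Fin (m + 1) → ℝ → ℝ)
    (hE : ∀ i, ContinuousOn (E i) (Set.Icc (a i) (b i)))
    (g : (Fin (m + 1) → ℝ) → Fin (m + 1) → ℝ)
    (hg : ∀ z i, g z i =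
      Real.log ((1 / (b i - a i)) * ∫ t in (a i)..(b i), Real.exp (z i * E i t)))
    (d : Fin (m + 1) → ℝ)
    (bfun : (Fin (m + 1) → ℝ) → Fin m → ℝ)
    (hbfun : ∀ z i, bfun z i =
      (d i.succ - g z i.succ) - (d i.castSucc - g z i.castSucc))
    (A : Matrix (Fin m) (Fin (m + 1)) ℝ)
    (hA : ∀ i j, A i j = if j = i.castSucc then -1 else if j = i.succ then 1 else 0)
    (lam2 : ℝ) (hlam2 : 0 < lam2)
    (K : Matrix (Fin (m + 1)) (Fin (m + 1)) ℝ)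
    (hK : K = Aᵀ * A + lam2 • (1 : Matrix (Fin (m + 1)) (Fin (m + 1)) ℝ))
    (F : (Fin (m + 1) → ℝ) → Fin (m + 1) → ℝ)
    (hF : ∀ z, F z = K⁻¹.mulVec (Aᵀ.mulVec (bfun z)) + g z) :
    (∀ (i j k : Fin (m + 1)), j ≠ k → ∀ z : Fin (m + 1) → ℝ,
        fderiv ℝ (fun w => fderiv ℝ (fun v => F v i) w (Pi.single k 1)) z
          (Pi.single j 1) = 0) ∧
    (∀ (α : Fin (m + 1) → ℝ) (z : Fin (m + 1) → ℝ) (j k : Fin (m + 1)), j ≠ k →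
        ∑ i, α i *
          fderiv ℝ (fun w => fderiv ℝ (fun v => F v i) w (Pi.single k 1)) z
            (Pi.single j 1) = 0) := by
  classical
  -- the family of parametric integrals
  set I : Fin (m + 1) → ℕ → ℝ → ℝ :=
    fun q n s => ∫ t in (a q)..(b q), (E q t) ^ n * Real.exp (s * E q t) with hI
  have hIderiv : ∀ q n s, HasDerivAt (I q n) (I q (n + 1) s) s := fun q n s =>
    aux_hasDerivAt_int _ _ (hab q).le _ (hE q) n s
  have hIpos : ∀ q s, 0 < I q 0 s := by
    intro q s
    apply intervalIntegral.intervalIntegral_pos_of_pos_on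
    · have hc : ContinuousOn (fun t => (E q t) ^ 0 * Real.exp (s * E q t))
          (Set.uIcc (a q) (b q)) := by
        rw [Set.uIcc_of_le (hab q).le]
        exact ((hE q).pow 0).mul
          (Real.continuous_exp.comp_continuousOn (continuousOn_const.mul (hE q)))
      exact hc.intervalIntegrable
    · intro t _
      simp only [pow_zero, one_mul]
      exact Real.exp_pos _
    · exact hab q
  set h : Fin (m + 1) → ℝ → ℝ :=
    fun q s => Real.log ((1 / (b q - a q)) * I q 0 s) with hh_def
  set h1 : Fin (m + 1) → ℝ → ℝ := fun q s => I q 1 s / I q 0 s with hh1_def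
  set h2 : Fin (m + 1) → ℝ → ℝ :=
    fun q s => (I q 2 s * I q 0 s - I q 1 s * I q 1 s) / (I q 0 s) ^ 2 with hh2_def
  have hcpos : ∀ q, (0:ℝ) < 1 / (b q - a q) := fun q =>
    div_pos one_pos (sub_pos.2 (hab q))
  have hh : ∀ q s, HasDerivAt (h q) (h1 q s) s := by
    intro q s
    have d0 := (hIderiv q 0 s).const_mul (1 / (b q - a q))
    have hne : (1 / (b q - a q)) * I q 0 s ≠ 0 :=
      ne_of_gt (mul_pos (hcpos q) (hIpos q s))
    have := d0.log hne
    have heq : (1 / (b q - a q)) * I q 1 s / ((1 / (b q - a q)) * I q 0 s)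
        = I q 1 s / I q 0 s := mul_div_mul_left _ _ (ne_of_gt (hcpos q))
    convert this using 1
    exact heq.symm
  have hh1 : ∀ q s, HasDerivAt (h1 q) (h2 q s) s := by
    intro q s
    exact (hIderiv q 1 s).div (hIderiv q 0 s) (ne_of_gt (hIpos q s))
  have hgh : ∀ z q, g z q = h q (z q) := by
    intro z q
    rw [hg, hh_def]
    simp only [hI, pow_zero, one_mul]
  -- representation of each component of F
  have hrep : ∀ i : Fin (m + 1), ∃ (C : ℝ) (c : Fin (m + 1) → ℝ),
      (fun v => F v i) = fun v => C + ∑ q, c q * h q (v q) := by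
    intro i
    refine ⟨∑ p, (K⁻¹ * Aᵀ) i p * (d p.succ - d p.castSucc),
      fun q => (∑ p, (K⁻¹ * Aᵀ) i p *
        ((if q = p.castSucc then (1:ℝ) else 0) - (if q = p.succ then 1 else 0)))
        + (if q = i then 1 else 0), ?_⟩
    funext v
    rw [hF]
    simp only [Pi.add_apply]
    have hmv : K⁻¹.mulVec (Aᵀ.mulVec (bfun v)) i = ∑ p, (K⁻¹ * Aᵀ) i p * bfun v p := by
      rw [Matrix.mulVec_mulVec]
      simp [Matrix.mulVec, dotProduct]
    rw [hmv, hgh v i]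
    have hb' : ∀ p : Fin m, bfun v p = (d p.succ - d p.castSucc) +
        ((h p.castSucc (v p.castSucc)) - (h p.succ (v p.succ))) := by
      intro p
      rw [hbfun, hgh v p.succ, hgh v p.castSucc]
      ring
    have hrhs : ∀ q : Fin (m + 1),
        ((∑ p, (K⁻¹ * Aᵀ) i p *
          ((if q = p.castSucc then (1:ℝ) else 0) - (if q = p.succ then 1 else 0)))
          + (if q = i then 1 else 0)) * h q (v q)
        = (∑ p, (K⁻¹ * Aᵀ) i p *
            ((if q = p.castSucc then (1:ℝ) else 0) * h q (v q)
              - (if q = p.succ then 1 else 0) * h q (v q)))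
          + (if q = i then 1 else 0) * h q (v q) := by
      intro q
      rw [add_mul, Finset.sum_mul]
      congr 1
      refine Finset.sum_congr rfl fun p _ => ?_
      ring
    calc (∑ p, (K⁻¹ * Aᵀ) i p * bfun v p) + h i (v i)
        = (∑ p, ((K⁻¹ * Aᵀ) i p * (d p.succ - d p.castSucc)
            + (K⁻¹ * Aᵀ) i p *
              ((h p.castSucc (v p.castSucc)) - (h p.succ (v p.succ))))) + h i (v i) := by
          congr 1
          refine Finset.sum_congr rfl fun p _ => ?_
          rw [hb' p]; ring
      _ = (∑ p, (K⁻¹ * Aᵀ) i p * (d p.succ - d p.castSucc))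
            + ((∑ p, (K⁻¹ * Aᵀ) i p *
              ((h p.castSucc (v p.castSucc)) - (h p.succ (v p.succ)))) + h i (v i)) := by
          rw [Finset.sum_add_distrib]; ring
      _ = (∑ p, (K⁻¹ * Aᵀ) i p * (d p.succ - d p.castSucc))
            + ∑ q, ((∑ p, (K⁻¹ * Aᵀ) i p *
                ((if q = p.castSucc then (1:ℝ) else 0) - (if q = p.succ then 1 else 0)))
                + (if q = i then 1 else 0)) * h q (v q) := by
          congr 1
          rw [Finset.sum_congr rfl fun q _ => hrhs q, Finset.sum_add_distrib,
            Finset.sum_comm]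
          congr 1
          · refine Finset.sum_congr rfl fun p _ => ?_
            rw [← Finset.mul_sum, Finset.sum_sub_distrib]
            simp [Finset.sum_ite_eq']
          · simp [Finset.sum_ite_eq']
  constructor
  · intro i j k hjk z
    obtain ⟨C, c, hC⟩ := hrep i
    exact aux_zero h h1 h2 hh hh1 _ C c hC j k hjk z
  · intro α z j k hjk
    apply Finset.sum_eq_zero
    intro i _
    obtain ⟨C, c, hC⟩ := hrep i
    rw [aux_zero h h1 h2 hh hh1 _ C c hC j k hjk z, mul_zero]
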